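/- Let Z be a standard Gaussian random variable, ψ > 0, and g : ℝ → ℝ a continuous nonnegative function with g(0) = 0 and g(x) ≤ C·x² for |x| ≤ 1 (for some C > 0). Then E[(ι + g(ψ^{1/2} Z))⁻¹] → +∞ as ι ↓ 0. In fact, E[(ι + g(ψ^{1/2}Z))⁻¹] ≥ c·ι^{-1/2} for some constant c > 0 and all sufficiently small ι > 0. -/

import Mathlib

open MeasureTheory ProbabilityTheory Filter Set
open scoped NNReal ENNReal

/-- Lower bound on the standard Gaussian measure of an interval `[-r, r]` with `0 < r ≤ 1`. -/
lemma gauss_icc_lb {r : ℝ} (hr : 0 < r) (hr1 : r ≤ 1) :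
    2 * r * ((Real.sqrt (2 * Real.pi))⁻¹ * Real.exp (-(1:ℝ)/2)) ≤
      ((gaussianReal 0 1) (Icc (-r) r)).toReal := by
  have h1 : (1 : ℝ≥0) ≠ 0 := one_ne_zero
  rw [gaussianReal_apply_eq_integral 0 h1]
  set c₀ : ℝ := (Real.sqrt (2 * Real.pi))⁻¹ * Real.exp (-(1:ℝ)/2) with hc₀
  have hkey : c₀ * ((volume (Icc (-r) r)).toReal) ≤
      ∫ x in Icc (-r) r, gaussianPDFReal 0 1 x := by
    refine setIntegral_ge_of_const_le_real measurableSet_Icc ?_ ?_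
      ((integrable_gaussianPDFReal 0 1).integrableOn)
    · rw [Real.volume_Icc]; exact ENNReal.ofReal_ne_top
    · intro x hx
      have hx1 : |x| ≤ 1 := by
        rw [abs_le]; constructor
        · linarith [hx.1]
        · linarith [hx.2]
      have hxx : x ^ 2 ≤ 1 := by
        have := sq_abs x ▸ pow_le_one₀ (abs_nonneg x) hx1
        nlinarith [sq_abs x, abs_nonneg x]
      simp only [gaussianPDFReal, NNReal.coe_one, mul_one, sub_zero]
      have hexp : Real.exp (-(1:ℝ)/2) ≤ Real.exp (-x ^ 2 / 2) :=
        Real.exp_le_exp.mpr (by linarith)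
      exact mul_le_mul_of_nonneg_left hexp (by positivity)
  have hvol : (volume (Icc (-r) r)).toReal = 2 * r := by
    rw [Real.volume_Icc, ENNReal.toReal_ofReal (by linarith)]; ring
  rw [hvol] at hkey
  have hnn : 0 ≤ ∫ x in Icc (-r) r, gaussianPDFReal 0 1 x :=
    integral_nonneg fun x => gaussianPDFReal_nonneg 0 1 x
  rw [ENNReal.toReal_ofReal hnn]
  calc 2 * r * c₀ = c₀ * (2 * r) := by ring
    _ ≤ _ := hkey

theorem stmt_3 (ψ : ℝ) (hψ : 0 < ψ) (g : ℝ → ℝ) (hgcont : Continuous g)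
    (hgnonneg : ∀ x, 0 ≤ g x) (hg0 : g 0 = 0)
    (C : ℝ) (hC : 0 < C) (hquad : ∀ x : ℝ, |x| ≤ 1 → g x ≤ C * x ^ 2) :
    (∃ c > (0:ℝ), ∃ ι₀ > (0:ℝ), ∀ ι : ℝ, 0 < ι → ι ≤ ι₀ →
      c * ι ^ (-(1:ℝ)/2) ≤ ∫ z, (ι + g (Real.sqrt ψ * z))⁻¹ ∂(gaussianReal 0 1)) ∧
    Tendsto (fun ι : ℝ => ∫ z, (ι + g (Real.sqrt ψ * z))⁻¹ ∂(gaussianReal 0 1))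
      (nhdsWithin 0 (Ioi 0)) atTop := by
  set μ := gaussianReal 0 (1 : ℝ≥0)
  set c₀ : ℝ := (Real.sqrt (2 * Real.pi))⁻¹ * Real.exp (-(1:ℝ)/2) with hc₀
  have hc₀pos : 0 < c₀ := by positivity
  have hCψ : 0 < C * ψ := mul_pos hC hψ
  set c : ℝ := c₀ / Real.sqrt (C * ψ) with hc
  have hcpos : 0 < c := by positivity
  set ι₀ : ℝ := min C (C * ψ) with hι₀
  have hι₀pos : 0 < ι₀ := lt_min hC hCψ
  have main : ∀ ι : ℝ, 0 < ι → ι ≤ ι₀ →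
      c * ι ^ (-(1:ℝ)/2) ≤ ∫ z, (ι + g (Real.sqrt ψ * z))⁻¹ ∂μ := by
    intro ι hι hιι₀
    have hιC : ι ≤ C := hιι₀.trans (min_le_left _ _)
    have hιCψ : ι ≤ C * ψ := hιι₀.trans (min_le_right _ _)
    set r : ℝ := Real.sqrt (ι / (C * ψ)) with hr
    have hrpos : 0 < r := Real.sqrt_pos.mpr (div_pos hι hCψ)
    have hr1 : r ≤ 1 := by
      rw [hr, show (1:ℝ) = Real.sqrt 1 from (Real.sqrt_one).symm]
      exact Real.sqrt_le_sqrt (by rw [div_le_one hCψ]; exact hιCψ)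
    set f : ℝ → ℝ := fun z => (ι + g (Real.sqrt ψ * z))⁻¹ with hf
    have hpos : ∀ z, 0 < ι + g (Real.sqrt ψ * z) := fun z =>
      lt_of_lt_of_le hι (le_add_of_nonneg_right (hgnonneg _))
    have hfcont : Continuous f := by
      apply Continuous.inv₀
      · exact continuous_const.add (hgcont.comp (continuous_const.mul continuous_id))
      · intro z; exact (hpos z).ne'
    have hfnonneg : ∀ z, 0 ≤ f z := fun z => inv_nonneg.mpr (hpos z).le
    have hint : Integrable f μ := by
      refine Integrable.mono' (integrable_const ι⁻¹) hfcont.aestronglyMeasurable ?_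
      filter_upwards with z
      rw [Real.norm_eq_abs, abs_of_nonneg (hfnonneg z)]
      exact inv_anti₀ hι (le_add_of_nonneg_right (hgnonneg _))
    have hlow : ∀ z ∈ Icc (-r) r, (2 * ι)⁻¹ ≤ f z := by
      intro z hz
      have hzabs : |z| ≤ r := abs_le.mpr hz
      have hsψ : 0 ≤ Real.sqrt ψ := Real.sqrt_nonneg ψ
      have habs : |Real.sqrt ψ * z| ≤ 1 := by
        rw [abs_mul, abs_of_nonneg hsψ]
        calc Real.sqrt ψ * |z| ≤ Real.sqrt ψ * r := by gcongr
          _ = Real.sqrt (ψ * (ι / (C * ψ))) := by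
              rw [hr, ← Real.sqrt_mul hψ.le]
          _ = Real.sqrt (ι / C) := by
              congr 1; field_simp
          _ ≤ 1 := by
              rw [show (1:ℝ) = Real.sqrt 1 from (Real.sqrt_one).symm]
              exact Real.sqrt_le_sqrt (by rw [div_le_one hC]; exact hιC)
      have hgle : g (Real.sqrt ψ * z) ≤ ι := by
        calc g (Real.sqrt ψ * z) ≤ C * (Real.sqrt ψ * z) ^ 2 := hquad _ habs
          _ = C * ψ * z ^ 2 := by
              rw [mul_pow, Real.sq_sqrt hψ.le]; ring
          _ ≤ C * ψ * r ^ 2 := by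
              have hz2 : z ^ 2 ≤ r ^ 2 := by nlinarith [sq_abs z, abs_nonneg z]
              nlinarith
          _ = ι := by
              rw [hr, Real.sq_sqrt (div_nonneg hι.le hCψ.le)]
              field_simp
      rw [hf]
      apply inv_anti₀ (hpos z)
      linarith
    have step1 : ∫ z in Icc (-r) r, f z ∂μ ≤ ∫ z, f z ∂μ :=
      setIntegral_le_integral hint (ae_of_all _ hfnonneg)
    have step2 : (2 * ι)⁻¹ * (μ (Icc (-r) r)).toReal ≤ ∫ z in Icc (-r) r, f z ∂μ := by
      refine setIntegral_ge_of_const_le_real measurableSet_Icc (measure_ne_top μ _) hlow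
        hint.integrableOn
    have step3 : 2 * r * c₀ ≤ (μ (Icc (-r) r)).toReal := gauss_icc_lb hrpos hr1
    have hchain : (2 * ι)⁻¹ * (2 * r * c₀) ≤ ∫ z, f z ∂μ := by
      calc (2 * ι)⁻¹ * (2 * r * c₀) ≤ (2 * ι)⁻¹ * (μ (Icc (-r) r)).toReal := by
            gcongr
        _ ≤ ∫ z in Icc (-r) r, f z ∂μ := step2
        _ ≤ _ := step1
    have heq : c * ι ^ (-(1:ℝ)/2) = (2 * ι)⁻¹ * (2 * r * c₀) := by
      have h1 : ι ^ (-(1:ℝ)/2) = (Real.sqrt ι)⁻¹ := by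
        rw [neg_div, Real.rpow_neg hι.le, Real.sqrt_eq_rpow]
      have h2 : r = Real.sqrt ι / Real.sqrt (C * ψ) := by
        rw [hr, Real.sqrt_div hι.le]
      have hsι : 0 < Real.sqrt ι := Real.sqrt_pos.mpr hι
      have hsCψ : 0 < Real.sqrt (C * ψ) := Real.sqrt_pos.mpr hCψ
      have hι_eq : ι = Real.sqrt ι * Real.sqrt ι := (Real.mul_self_sqrt hι.le).symm
      rw [h1, h2, hc, hι_eq]
      field_simp
      linear_combination -Real.sq_sqrt (sq_nonneg (Real.sqrt ι))
    rw [heq]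
    exact hchain
  refine ⟨⟨c, hcpos, ι₀, hι₀pos, main⟩, ?_⟩
  have htend : Tendsto (fun ι : ℝ => c * ι ^ (-(1:ℝ)/2)) (nhdsWithin 0 (Ioi 0)) atTop := by
    have h1 : Tendsto (fun ι : ℝ => Real.sqrt ι) (nhdsWithin 0 (Ioi 0)) (nhdsWithin 0 (Ioi 0)) := by
      apply tendsto_nhdsWithin_of_tendsto_nhds_of_eventually_within
      · have := (Real.continuous_sqrt.tendsto 0)
        simpa using this.mono_left nhdsWithin_le_nhds
      · filter_upwards [self_mem_nhdsWithin] with x hx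
        exact Real.sqrt_pos.mpr hx
    have h2 : Tendsto (fun ι : ℝ => (Real.sqrt ι)⁻¹) (nhdsWithin 0 (Ioi 0)) atTop :=
      tendsto_inv_nhdsGT_zero.comp h1
    have h3 : Tendsto (fun ι : ℝ => c * (Real.sqrt ι)⁻¹) (nhdsWithin 0 (Ioi 0)) atTop :=
      Tendsto.const_mul_atTop hcpos h2
    apply h3.congr'
    filter_upwards [self_mem_nhdsWithin] with ι hι
    rw [neg_div, Real.rpow_neg (le_of_lt hι), Real.sqrt_eq_rpow]
  apply tendsto_atTop_mono' _ _ htend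
  filter_upwards [Ioc_mem_nhdsGT_of_mem (⟨le_refl (0:ℝ), hι₀pos⟩ : (0:ℝ) ∈ Ico 0 ι₀)] with ι hι
  exact main ι hι.1 hι.2
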